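/- Let H be a Hilbert space with a self-adjoint nonnegative operator □ (Laplacian) admitting a decomposition H = Ker □ ⊕ Im □ with harmonic projector 𝐇 onto Ker □ and Green operator N satisfying u = 𝐇u + □Nu for all u. Let d' be an operator such that for every u, d'(□u) = a·d''d''*(d'u) + b·d''*d''(d'u) for positive constants a, b, where □ = d''d''* + d''*d''. If u satisfies □(𝐇u) = 0 (i.e., 𝐇u is harmonic) then d'(𝐇u) is harmonic: □(d'𝐇u) = 0. -/
import Mathlib

open scoped RealInnerProductSpace

/-- If `□ = d''d''* + d''*d''` (with `d''*` adjoint to `d''`), and the key equality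
`d'(□w) = a·d''d''*(d'w) + b·d''*d''(d'w)` holds with `a, b > 0`, then `𝐇u` harmonic
implies `d'(𝐇u)` harmonic. -/
theorem dprime_harmonic {H : Type*} [NormedAddCommGroup H] [InnerProductSpace ℝ H]
    (d' d'' d''s Hh : H →ₗ[ℝ] H)
    (hadj : ∀ x y : H, ⟪d'' x, y⟫ = ⟪x, d''s y⟫)
    (a b : ℝ) (ha : 0 < a) (hb : 0 < b)
    (hkey : ∀ w : H, d' (d'' (d''s w) + d''s (d'' w)) =
      a • d'' (d''s (d' w)) + b • d''s (d'' (d' w)))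
    (u : H) (hu : d'' (d''s (Hh u)) + d''s (d'' (Hh u)) = 0) :
    d'' (d''s (d' (Hh u))) + d''s (d'' (d' (Hh u))) = 0 := by
  set w := d' (Hh u) with hw
  have h0 : a • d'' (d''s w) + b • d''s (d'' w) = 0 := by
    rw [← hkey (Hh u), hu, map_zero]
  have hpair : a * ‖d''s w‖ ^ 2 + b * ‖d'' w‖ ^ 2 = 0 := by
    have := congrArg (fun z => ⟪z, w⟫) h0
    simp only [inner_add_left, inner_smul_left, inner_zero_left] at this
    have h1 : ⟪d'' (d''s w), w⟫ = ‖d''s w‖ ^ 2 := by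
      rw [hadj, real_inner_self_eq_norm_sq]
    have h2 : ⟪d''s (d'' w), w⟫ = ‖d'' w‖ ^ 2 := by
      rw [real_inner_comm, ← hadj, real_inner_self_eq_norm_sq]
    simp only [starRingEnd_apply, star_trivial] at this
    rw [h1, h2] at this
    linarith
  have hs1 : d''s w = 0 := by
    have := sq_nonneg ‖d''s w‖
    have := sq_nonneg ‖d'' w‖
    have h : ‖d''s w‖ ^ 2 = 0 := by nlinarith
    simpa using (pow_eq_zero_iff (two_ne_zero)).1 h
  have hs2 : d'' w = 0 := by
    have := sq_nonneg ‖d''s w‖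
    have := sq_nonneg ‖d'' w‖
    have h : ‖d'' w‖ ^ 2 = 0 := by nlinarith
    simpa using (pow_eq_zero_iff (two_ne_zero)).1 h
  rw [hs1, hs2, map_zero, map_zero, add_zero]
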